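/- Let ≺ be an acyclic binary relation on a finite set r and suppose X, Y ⊆ r satisfy X ≪ Y (i.e., every x ∈ X \ Y is dominated by some y ∈ Y \ X). Then every maximal (X\Y, Y\X)-alternating ≺-chain has even length, i.e., ends with an element of Y \ X. -/
import Mathlib


/-- A relation is acyclic if no element is related to itself by the transitive closure. -/
def Acyclic {α : Type*} (prec : α → α → Prop) : Prop :=
  ∀ x, ¬ Relation.TransGen prec x x

/-- The global preference order on sets of tuples: `X ≪ Y`. -/
def ll {α : Type*} (prec : α → α → Prop) (X Y : Set α) : Prop :=
  ∀ x ∈ X \ Y, ∃ y ∈ Y \ X, prec x y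

/-- Closed neighborhood of `x` in the conflict graph. -/
def nbhd {α : Type*} (conflict : α → α → Prop) (x : α) : Set α :=
  {x} ∪ {y | conflict x y}

/-- The winnow operator: elements of `s` not dominated by any element of `s`. -/
def winnow {α : Type*} (prec : α → α → Prop) (s : Set α) : Set α :=
  {t ∈ s | ¬ ∃ t' ∈ s, prec t t'}

/-- A repair: a maximal subset of `r` containing no conflicting pair. -/
def IsRepair {α : Type*} (r : Set α) (conflict : α → α → Prop) (X : Set α) : Prop :=
  X ⊆ r ∧ (∀ a ∈ X, ∀ b ∈ X, ¬ conflict a b) ∧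
    ∀ y ∈ r, y ∉ X → ∃ a ∈ X, conflict y a

/-- A locally preferred repair: obtainable by iteratively choosing an undominated
tuple and removing it together with its conflict neighborhood. -/
def IsLRepair {α : Type*} (r : Set α) (conflict prec : α → α → Prop) (X : Set α) : Prop :=
  ∃ (n : ℕ) (x : Fin n → α), Function.Injective x ∧ X = Set.range x ∧
    (∀ i : Fin n, x i ∈ winnow prec (r \ {y | ∃ j, j < i ∧ y ∈ nbhd conflict (x j)})) ∧
    winnow prec (r \ {y | ∃ i, y ∈ nbhd conflict (x i)}) = ∅

/-- A globally preferred repair: a `≪`-maximal repair. -/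
def IsGRepair {α : Type*} (r : Set α) (conflict prec : α → α → Prop) (X : Set α) : Prop :=
  IsRepair r conflict X ∧ ∀ Y, IsRepair r conflict Y → ll prec X Y → Y = X

/-- if `X ≪ Y`, every maximal `(X\Y, Y\X)`-alternating ≺-chain has
even length (it ends with an element of `Y \ X`). The chain of length `n` is
given by `c : Fin n → α`, its element at (0-based) position `i` lying in
`X \ Y` for even `i` and in `Y \ X` for odd `i`. Maximality says it cannot be
extended by one further element. -/
theorem maximal_alternating_chain_even {α : Type*} (r : Set α) (hr : r.Finite)
    (prec : α → α → Prop) (hacyc : Acyclic prec) (X Y : Set α)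
    (hX : X ⊆ r) (hY : Y ⊆ r) (hll : ll prec X Y)
    (n : ℕ) (hn : 0 < n) (c : Fin n → α)
    (hmem : ∀ i : Fin n, if Even (i : ℕ) then c i ∈ X \ Y else c i ∈ Y \ X)
    (hchain : ∀ (i : ℕ) (h : i + 1 < n),
      prec (c ⟨i, Nat.lt_of_succ_lt h⟩) (c ⟨i + 1, h⟩))
    (hmax : ¬ ∃ z, (if Even n then z ∈ X \ Y else z ∈ Y \ X) ∧
      prec (c ⟨n - 1, Nat.sub_lt hn one_pos⟩) z) :
    Even n := by
  by_contra hodd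
  have hlast := hmem ⟨n - 1, Nat.sub_lt hn one_pos⟩
  have hev : Even ((n : ℕ) - 1) := by
    rcases Nat.even_or_odd n with h | h
    · exact absurd h hodd
    · rcases h with ⟨k, hk⟩
      exact ⟨k, by omega⟩
  rw [if_pos hev] at hlast
  obtain ⟨y, hy, hpy⟩ := hll _ hlast
  exact hmax ⟨y, by rw [if_neg hodd]; exact hy, hpy⟩
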